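/- Let M = (S, A, P, r, γ) be a finite MDP with discount factor γ ∈ [0,1), let Φ : S → ℝ, and let M' be the shaped MDP with reward r'(s,a,s') = r(s,a,s') + γ·Φ(s') − Φ(s). Then for every state s ∈ S, the set of actions maximizing Q*_{M'}(s,·) equals the set of actions maximizing Q*_M(s,·); consequently, a deterministic policy π : S → A is greedy with respect to Q*_{M'} (i.e., optimal in M') if and only if it is greedy with respect to Q*_M (i.e., optimal in M). Hence potential-based reward shaping preserves policy invariance. -/

import Mathlib

/-- **Potential-based reward shaping preserves policy invariance.**
Let `M = (S, A, P, r, γ)` be a finite MDP with `γ ∈ [0,1)`, `Φ : S → ℝ` a potential function,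
and `M'` the shaped MDP with reward `r'(s,a,s') = r(s,a,s') + γΦ(s') - Φ(s)`.
If `QM` and `QM'` are the optimal action-value functions of `M` and `M'` respectively
(fixed points of the respective Bellman optimality operators), then for every state `s`
the argmax set of `QM' s ·` equals the argmax set of `QM s ·`; consequently, a deterministic
policy is greedy with respect to `QM'` (optimal in `M'`) iff it is greedy with respect to
`QM` (optimal in `M`). -/
theorem pbrs_policy_invariance
    {S A : Type*} [Fintype S] [Fintype A] [Nonempty S] [Nonempty A]
    (P : S → A → S → ℝ)
    (hP0 : ∀ s a s', 0 ≤ P s a s')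
    (hP1 : ∀ s a, ∑ s', P s a s' = 1)
    (r : S → A → S → ℝ)
    (γ : ℝ) (hγ0 : 0 ≤ γ) (hγ1 : γ < 1)
    (Φ : S → ℝ)
    (QM : S → A → ℝ)
    (hQM : ∀ s a,
      QM s a = ∑ s', P s a s' *
        (r s a s' + γ * Finset.univ.sup' Finset.univ_nonempty fun a' => QM s' a'))
    (QM' : S → A → ℝ)
    (hQM' : ∀ s a,
      QM' s a = ∑ s', P s a s' *
        ((r s a s' + γ * Φ s' - Φ s) +
          γ * Finset.univ.sup' Finset.univ_nonempty fun a' => QM' s' a')) :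
    (∀ s, {a : A | ∀ b, QM' s b ≤ QM' s a} = {a : A | ∀ b, QM s b ≤ QM s a}) ∧
    (∀ pol : S → A,
      (∀ s b, QM' s b ≤ QM' s (pol s)) ↔ (∀ s b, QM s b ≤ QM s (pol s))) := by
  classical
  set g : S → ℝ := fun s => Finset.univ.sup' Finset.univ_nonempty fun a' => QM' s a' with hg
  set f : S → ℝ := fun s => Finset.univ.sup' Finset.univ_nonempty fun a' => QM s a' with hf
  set C : ℝ := Finset.univ.sup' Finset.univ_nonempty
      (fun p : S × A => |QM' p.1 p.2 + Φ p.1 - QM p.1 p.2|) with hCdef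
  have hDC : ∀ s a, |QM' s a + Φ s - QM s a| ≤ C := by
    intro s a
    exact Finset.le_sup' (fun p : S × A => |QM' p.1 p.2 + Φ p.1 - QM p.1 p.2|)
      (Finset.mem_univ (s, a))
  have hC0 : 0 ≤ C := le_trans (abs_nonneg _) (hDC (Classical.arbitrary S) (Classical.arbitrary A))
  -- sup difference bound
  have hsup : ∀ s', |Φ s' + g s' - f s'| ≤ C := by
    intro s'
    rw [abs_le]
    constructor
    · have h1 : f s' ≤ g s' + Φ s' + C := by
        apply Finset.sup'_le
        intro a _
        have := hDC s' a
        have h2 : QM' s' a ≤ g s' := Finset.le_sup' (fun a' => QM' s' a') (Finset.mem_univ a)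
        rw [abs_le] at this
        linarith [this.1]
      linarith
    · apply sub_le_iff_le_add.mpr
      have h1 : g s' + Φ s' ≤ f s' + C := by
        rw [show f s' + C = (f s' + C - Φ s') + Φ s' by ring]
        apply add_le_add_left
        apply Finset.sup'_le
        intro a _
        have := hDC s' a
        have h2 : QM s' a ≤ f s' := Finset.le_sup' (fun a' => QM s' a') (Finset.mem_univ a)
        rw [abs_le] at this
        linarith [this.2]
      linarith
  -- contraction step
  have hD : ∀ s a, |QM' s a + Φ s - QM s a| ≤ γ * C := by
    intro s a
    have hEq : QM' s a + Φ s - QM s a = ∑ s', P s a s' * (γ * (Φ s' + g s' - f s')) := by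
      rw [hQM' s a, hQM s a]
      have h1 : Φ s = ∑ s', P s a s' * Φ s := by
        rw [← Finset.sum_mul, hP1, one_mul]
      nth_rewrite 2 [h1]
      rw [← Finset.sum_add_distrib, ← Finset.sum_sub_distrib]
      apply Finset.sum_congr rfl
      intro s' _
      ring
    rw [hEq]
    calc |∑ s', P s a s' * (γ * (Φ s' + g s' - f s'))|
        ≤ ∑ s', |P s a s' * (γ * (Φ s' + g s' - f s'))| :=
          Finset.abs_sum_le_sum_abs _ _
      _ ≤ ∑ s', P s a s' * (γ * C) := by
          apply Finset.sum_le_sum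
          intro s' _
          rw [abs_mul, abs_of_nonneg (hP0 s a s')]
          apply mul_le_mul_of_nonneg_left _ (hP0 s a s')
          rw [abs_mul, abs_of_nonneg hγ0]
          exact mul_le_mul_of_nonneg_left (hsup s') hγ0
      _ = γ * C := by rw [← Finset.sum_mul, hP1, one_mul]
  have hCle : C ≤ γ * C := by
    apply Finset.sup'_le
    intro p _
    exact hD p.1 p.2
  have hCzero : C = 0 := by nlinarith
  have key : ∀ s a, QM' s a = QM s a - Φ s := by
    intro s a
    have := hDC s a
    rw [hCzero] at this
    have := abs_nonpos_iff.mp this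
    linarith
  constructor
  · intro s
    ext a
    simp only [Set.mem_setOf_eq, key]
    constructor <;> intro h b <;> have := h b <;> linarith
  · intro pol
    constructor <;> intro h s b <;> have := h s b <;> simp only [key] at * <;> linarith
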